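/- For pointed Kripke models (M,w) and (N,v) and a set Q of generalized modalities: if N,v satisfies the canonical Q-characteristic depth-d formula φ^{Q,d}_{M⊔N,w} of w computed in the disjoint union M⊔N, then Player 2 has a winning strategy in the d-round Q-bisimulation game on (M,w) and (N,v). -/
import Mathlib


/-- A Kripke model over proposition symbols `P` with node set `V`. -/
structure Kripke (P V : Type) where
  succ : V → Finset V
  label : V → P → Prop

/-- Formulas of `PL(𝒬)`: propositional logic extended with generalized modalities
indexed by `ι`. -/
inductive PLQ (P ι : Type) : Type
  | bot : PLQ P ι
  | prop : P → PLQ P ι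
  | neg : PLQ P ι → PLQ P ι
  | and : PLQ P ι → PLQ P ι → PLQ P ι
  | or : PLQ P ι → PLQ P ι → PLQ P ι
  | app : ι → PLQ P ι → PLQ P ι

/-- Modal depth of a `PL(𝒬)` formula. -/
def PLQ.md {P ι : Type} : PLQ P ι → ℕ
  | .bot => 0
  | .prop _ => 0
  | .neg φ => φ.md
  | .and φ ψ => max φ.md ψ.md
  | .or φ ψ => max φ.md ψ.md
  | .app _ φ => φ.md + 1

/-- Satisfaction of `PL(𝒬)` formulas. A generalized quantifier is an
isomorphism-closed class of structures `(D, P)` with `P ⊆ D`, so it is determined by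
the pair of cardinalities `(|D|, |P|)`; accordingly the family `𝒬` is given as
`Q : ι → ℕ → ℕ → Prop`, and `M,v ⊨ ⟨Q i⟩φ` iff
`(N(v), {u ∈ N(v) : M,u ⊨ φ}) ∈ Q i`, i.e. `Q i |N(v)| |{u ∈ N(v) : M,u ⊨ φ}|`. -/
def Kripke.SatQ {P V ι : Type} (M : Kripke P V) (Q : ι → ℕ → ℕ → Prop) :
    PLQ P ι → V → Prop
  | .bot, _ => False
  | .prop p, v => M.label v p
  | .neg φ, v => ¬ M.SatQ Q φ v
  | .and φ ψ, v => M.SatQ Q φ v ∧ M.SatQ Q ψ v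
  | .or φ ψ, v => M.SatQ Q φ v ∨ M.SatQ Q ψ v
  | .app i φ, v => Q i (M.succ v).card {u | u ∈ M.succ v ∧ M.SatQ Q φ u}.ncard

/-- Disjoint union `M ⊔ N` of two Kripke models. -/
def Kripke.sum {P V W : Type} (M : Kripke P V) (N : Kripke P W) : Kripke P (V ⊕ W) where
  succ := fun x => match x with
    | .inl a => (M.succ a).map ⟨Sum.inl, Sum.inl_injective⟩
    | .inr b => (N.succ b).map ⟨Sum.inr, Sum.inr_injective⟩
  label := fun x p => match x with
    | .inl a => M.label a p
    | .inr b => N.label b p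

/-- `AttWin K Q d a b` : the player currently in the attacker role has a winning
strategy in the `d`-round `𝒬`-bisimulation game from position `(a, b)` (both pebbles on
nodes of the single model `K`, e.g. a disjoint union). The attacker wins immediately if
the pebbled nodes disagree on a proposition symbol; otherwise the attacker selects a
pebble `u` (the other being `v`), a modality `⟨Q i⟩`, a set `X ⊆ N(u)` with
`(N(u),X) ∈ Q i`, and a set `P' ⊆ N(v)`; the defender may contest `X` or `P'`
(moving the pebbles as prescribed), or reply with `X' ⊆ N(v)` with `(N(v),X') ∈ Q i`
and `P' ⊆ X'`, after which the attacker may contest `X'` (becoming the defender), move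
to `N(v) \ X'` × `X` (becoming the defender), or move one pebble into `X'` with the
defender answering in `X ∪ P'`. (By determinacy of this finite game, the defender,
i.e. Player 2, has a winning strategy iff `AttWin` fails.) -/
def AttWin {P V ι : Type} [DecidableEq V] (K : Kripke P V) (Q : ι → ℕ → ℕ → Prop) :
    ℕ → V → V → Prop
  | 0, a, b => ¬ ∀ p, K.label a p ↔ K.label b p
  | (d+1), a, b => (¬ ∀ p, K.label a p ↔ K.label b p) ∨
      ∃ u v : V, ((u, v) = (a, b) ∨ (u, v) = (b, a)) ∧
      ∃ (i : ι) (X P' : Finset V), X ⊆ K.succ u ∧ Q i (K.succ u).card X.card ∧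
        P' ⊆ K.succ v ∧
        (∀ x ∈ X, ∀ y ∈ K.succ u \ X, AttWin K Q d x y) ∧
        (∀ y ∈ P', ∀ x ∈ K.succ u, AttWin K Q d x y) ∧
        (∀ X' : Finset V, X' ⊆ K.succ v → Q i (K.succ v).card X'.card → P' ⊆ X' →
          (∃ y ∈ X', ∃ z ∈ K.succ v \ X', ¬ AttWin K Q d y z) ∨
          (∃ y ∈ K.succ v \ X', ∃ x ∈ X, ¬ AttWin K Q d x y) ∨
          (∃ y ∈ X', ∀ x, (x ∈ X ∨ x ∈ P') → AttWin K Q d x y))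

/-- `Player 2 (the defender) has a winning strategy in the `d`-round `𝒬`-bisimulation
game from position `(a,b)` (via determinacy of the finite game). -/
def DefWin {P V ι : Type} [DecidableEq V] (K : Kripke P V) (Q : ι → ℕ → ℕ → Prop)
    (d : ℕ) (a b : V) : Prop := ¬ AttWin K Q d a b

/-- `CharSat K Q d w v` : `v` satisfies the canonical `𝒬`-characteristic depth-`d`
formula `φ^{𝒬,d}_{K,w}` of `w`. At depth 0 this is the full propositional agreement
with `w`; at depth `d+1` it additionally requires, for every modality `⟨Q i⟩` and every
set `C` of depth-`d` characteristic formulas of nodes of `K` (encoded by the set `S` of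
nodes whose characteristic formulas constitute `C`, so that a node `u` satisfies `⋁C`
iff `∃ x ∈ S, CharSat K Q d x u`), that `⟨Q i⟩(⋁C)` holds at `v` iff it holds at `w`. -/
def CharSat {P V ι : Type} (K : Kripke P V) (Q : ι → ℕ → ℕ → Prop) :
    ℕ → V → V → Prop
  | 0, w, v => ∀ p, K.label w p ↔ K.label v p
  | (d+1), w, v => (∀ p, K.label w p ↔ K.label v p) ∧
      ∀ (i : ι) (S : Set V),
        (Q i (K.succ w).card
            {u | u ∈ K.succ w ∧ ∃ x ∈ S, CharSat K Q d x u}.ncard ↔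
         Q i (K.succ v).card
            {u | u ∈ K.succ v ∧ ∃ x ∈ S, CharSat K Q d x u}.ncard)

section Aux

variable {P V ι : Type} [DecidableEq V] (K : Kripke P V) (Q : ι → ℕ → ℕ → Prop)

lemma charSat_refl : ∀ (d : ℕ) (a : V), CharSat K Q d a a
  | 0, a => by simp [CharSat]
  | (d+1), a => by simp [CharSat]

lemma charSat_symm : ∀ {d : ℕ} {a b : V}, CharSat K Q d a b → CharSat K Q d b a
  | 0, a, b, h => by
      simp only [CharSat] at h ⊢; exact fun p => (h p).symm
  | (d+1), a, b, h => by
      simp only [CharSat] at h ⊢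
      exact ⟨fun p => (h.1 p).symm, fun i S => (h.2 i S).symm⟩

lemma charSat_trans : ∀ {d : ℕ} {a b c : V},
    CharSat K Q d a b → CharSat K Q d b c → CharSat K Q d a c
  | 0, a, b, c, h1, h2 => by
      simp only [CharSat] at h1 h2 ⊢; exact fun p => (h1 p).trans (h2 p)
  | (d+1), a, b, c, h1, h2 => by
      simp only [CharSat] at h1 h2 ⊢
      exact ⟨fun p => (h1.1 p).trans (h2.1 p), fun i S => (h1.2 i S).trans (h2.2 i S)⟩

lemma charSet_eq (d : ℕ) (u : V) (S : Set V) [DecidablePred fun z => ∃ x ∈ S, CharSat K Q d x z] :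
    {z | z ∈ K.succ u ∧ ∃ x ∈ S, CharSat K Q d x z}
      = ↑((K.succ u).filter (fun z => ∃ x ∈ S, CharSat K Q d x z)) := by
  ext z; simp [Finset.mem_filter]

lemma defender_core (d : ℕ)
    (IH : ∀ a b : V, AttWin K Q d a b ↔ ¬ CharSat K Q d a b)
    {u v : V} (h : CharSat K Q (d+1) u v) :
    ¬ ∃ (i : ι) (X P' : Finset V), X ⊆ K.succ u ∧ Q i (K.succ u).card X.card ∧
        P' ⊆ K.succ v ∧
        (∀ x ∈ X, ∀ y ∈ K.succ u \ X, AttWin K Q d x y) ∧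
        (∀ y ∈ P', ∀ x ∈ K.succ u, AttWin K Q d x y) ∧
        (∀ X' : Finset V, X' ⊆ K.succ v → Q i (K.succ v).card X'.card → P' ⊆ X' →
          (∃ y ∈ X', ∃ z ∈ K.succ v \ X', ¬ AttWin K Q d y z) ∨
          (∃ y ∈ K.succ v \ X', ∃ x ∈ X, ¬ AttWin K Q d x y) ∨
          (∃ y ∈ X', ∀ x, (x ∈ X ∨ x ∈ P') → AttWin K Q d x y)) := by
  classical
  rintro ⟨i, X, P', hXsub, hQX, hPsub, hA, hB, hC3⟩
  simp only [CharSat] at h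
  set S : Set V := ↑X ∪ ↑P' with hS
  -- the S-characteristic set at u equals X
  have hUset : {z | z ∈ K.succ u ∧ ∃ x ∈ S, CharSat K Q d x z} = (↑X : Set V) := by
    ext z
    simp only [Set.mem_setOf_eq, hS, Set.mem_union, Finset.coe_sort_coe, Finset.mem_coe]
    constructor
    · rintro ⟨hzu, x, hx | hx, hxz⟩
      · by_contra hzX
        have := hA x hx z (Finset.mem_sdiff.2 ⟨hzu, hzX⟩)
        exact (IH x z).1 this hxz
      · exfalso
        have := hB x hx z hzu
        exact (IH z x).1 this (charSat_symm K Q hxz)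
    · intro hz
      exact ⟨hXsub hz, z, Or.inl hz, charSat_refl K Q d z⟩
  have hQu : Q i (K.succ u).card {z | z ∈ K.succ u ∧ ∃ x ∈ S, CharSat K Q d x z}.ncard := by
    rw [hUset, Set.ncard_coe_finset]; exact hQX
  have hQv := (h.2 i S).1 hQu
  set X' : Finset V := (K.succ v).filter (fun y => ∃ x ∈ S, CharSat K Q d x y) with hX'
  have hVset : {z | z ∈ K.succ v ∧ ∃ x ∈ S, CharSat K Q d x z} = (↑X' : Set V) := by
    ext z; simp [hX', Finset.mem_filter]
  have hQX' : Q i (K.succ v).card X'.card := by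
    rw [hVset, Set.ncard_coe_finset] at hQv; exact hQv
  have hX'sub : X' ⊆ K.succ v := Finset.filter_subset _ _
  have hPX' : P' ⊆ X' := by
    intro y hy
    refine Finset.mem_filter.2 ⟨hPsub hy, y, ?_, charSat_refl K Q d y⟩
    exact Or.inr (by exact_mod_cast hy)
  rcases hC3 X' hX'sub hQX' hPX' with ⟨y, hyX', z, hz, hnA⟩ | ⟨y, hy, x, hxX, hnA⟩ |
      ⟨y, hyX', hall⟩
  · -- contesting X' : y ∈ X', z ∉ X' must be distinguishable
    rcases Finset.mem_sdiff.1 hz with ⟨hzv, hzX'⟩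
    have hyz : CharSat K Q d y z := by
      by_contra hc; exact hnA ((IH y z).2 hc)
    rcases Finset.mem_filter.1 hyX' with ⟨-, x, hxS, hxy⟩
    exact hzX' (Finset.mem_filter.2 ⟨hzv, x, hxS, charSat_trans K Q hxy hyz⟩)
  · rcases Finset.mem_sdiff.1 hy with ⟨hyv, hyX'⟩
    have hxy : CharSat K Q d x y := by
      by_contra hc; exact hnA ((IH x y).2 hc)
    exact hyX' (Finset.mem_filter.2 ⟨hyv, x, Or.inl (by exact_mod_cast hxX), hxy⟩)
  · rcases Finset.mem_filter.1 hyX' with ⟨-, x, hxS, hxy⟩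
    have hx' : x ∈ X ∨ x ∈ P' := by
      rcases hxS with hx | hx
      · exact Or.inl (by exact_mod_cast hx)
      · exact Or.inr (by exact_mod_cast hx)
    exact (IH x y).1 (hall x hx') hxy

lemma attacker_core (d : ℕ)
    (IH : ∀ a b : V, AttWin K Q d a b ↔ ¬ CharSat K Q d a b)
    {u v : V} {i : ι} {S : Set V}
    (hu : Q i (K.succ u).card {z | z ∈ K.succ u ∧ ∃ x ∈ S, CharSat K Q d x z}.ncard)
    (hv : ¬ Q i (K.succ v).card {z | z ∈ K.succ v ∧ ∃ x ∈ S, CharSat K Q d x z}.ncard) :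
    ∃ (i : ι) (X P' : Finset V), X ⊆ K.succ u ∧ Q i (K.succ u).card X.card ∧
        P' ⊆ K.succ v ∧
        (∀ x ∈ X, ∀ y ∈ K.succ u \ X, AttWin K Q d x y) ∧
        (∀ y ∈ P', ∀ x ∈ K.succ u, AttWin K Q d x y) ∧
        (∀ X' : Finset V, X' ⊆ K.succ v → Q i (K.succ v).card X'.card → P' ⊆ X' →
          (∃ y ∈ X', ∃ z ∈ K.succ v \ X', ¬ AttWin K Q d y z) ∨
          (∃ y ∈ K.succ v \ X', ∃ x ∈ X, ¬ AttWin K Q d x y) ∨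
          (∃ y ∈ X', ∀ x, (x ∈ X ∨ x ∈ P') → AttWin K Q d x y)) := by
  classical
  set X : Finset V := (K.succ u).filter (fun z => ∃ x ∈ S, CharSat K Q d x z) with hX
  set Yb : Finset V := (K.succ v).filter (fun y => ∃ x ∈ S, CharSat K Q d x y) with hYb
  set P' : Finset V := (K.succ v).filter
      (fun y => (∃ x ∈ S, CharSat K Q d x y) ∧ ∀ z ∈ K.succ u, ¬ CharSat K Q d z y) with hP'
  have hUset : {z | z ∈ K.succ u ∧ ∃ x ∈ S, CharSat K Q d x z} = (↑X : Set V) := by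
    ext z; simp [hX, Finset.mem_filter]
  have hVset : {z | z ∈ K.succ v ∧ ∃ x ∈ S, CharSat K Q d x z} = (↑Yb : Set V) := by
    ext z; simp [hYb, Finset.mem_filter]
  rw [hUset, Set.ncard_coe_finset] at hu
  rw [hVset, Set.ncard_coe_finset] at hv
  refine ⟨i, X, P', Finset.filter_subset _ _, hu, Finset.filter_subset _ _, ?_, ?_, ?_⟩
  · -- (A)
    intro x hx y hy
    rcases Finset.mem_filter.1 hx with ⟨-, s, hsS, hsx⟩
    rcases Finset.mem_sdiff.1 hy with ⟨hyu, hyX⟩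
    refine (IH x y).2 fun hxy => ?_
    exact hyX (Finset.mem_filter.2 ⟨hyu, s, hsS, charSat_trans K Q hsx hxy⟩)
  · -- (B)
    intro y hy x hxu
    rcases Finset.mem_filter.1 hy with ⟨-, -, hnone⟩
    exact (IH x y).2 (hnone x hxu)
  · -- (C)
    intro X' hX'sub hQX' hPX'
    have hne : X' ≠ Yb := by
      rintro rfl; exact hv hQX'
    have : ∃ y, (y ∈ Yb ∧ y ∉ X') ∨ (y ∈ X' ∧ y ∉ Yb) := by
      by_contra hc
      push_neg at hc
      apply hne
      ext a
      rcases hc a with ⟨h1, h2⟩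
      exact ⟨h2, h1⟩
    rcases this with ⟨y, ⟨hyYb, hyX'⟩ | ⟨hyX', hyYb⟩⟩
    · -- y witnesses option 2
      rcases Finset.mem_filter.1 hyYb with ⟨hyv, s, hsS, hsy⟩
      have hyP' : y ∉ P' := fun hyp => hyX' (hPX' hyp)
      have hz : ∃ z ∈ K.succ u, CharSat K Q d z y := by
        by_contra hc
        push_neg at hc
        exact hyP' (Finset.mem_filter.2 ⟨hyv, ⟨s, hsS, hsy⟩, hc⟩)
      rcases hz with ⟨z, hzu, hzy⟩
      have hzX : z ∈ X :=
        Finset.mem_filter.2 ⟨hzu, s, hsS, charSat_trans K Q hsy (charSat_symm K Q hzy)⟩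
      refine Or.inr (Or.inl ⟨y, Finset.mem_sdiff.2 ⟨hyv, hyX'⟩, z, hzX, ?_⟩)
      exact fun hA => (IH z y).1 hA hzy
    · -- y witnesses option 3
      refine Or.inr (Or.inr ⟨y, hyX', fun x hx => ?_⟩)
      have hxS : ∃ s ∈ S, CharSat K Q d s x := by
        rcases hx with hx | hx
        · rcases Finset.mem_filter.1 hx with ⟨-, s, hsS, hsx⟩; exact ⟨s, hsS, hsx⟩
        · rcases Finset.mem_filter.1 hx with ⟨-, ⟨s, hsS, hsx⟩, -⟩; exact ⟨s, hsS, hsx⟩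
      rcases hxS with ⟨s, hsS, hsx⟩
      refine (IH x y).2 fun hxy => ?_
      exact hyYb (Finset.mem_filter.2 ⟨hX'sub hyX', s, hsS, charSat_trans K Q hsx hxy⟩)

lemma attWin_iff_not_charSat : ∀ (d : ℕ) (a b : V),
    AttWin K Q d a b ↔ ¬ CharSat K Q d a b := by
  intro d
  induction d with
  | zero =>
    intro a b
    simp only [AttWin, CharSat]
  | succ d IH =>
    intro a b
    simp only [AttWin, CharSat]
    constructor
    · rintro (hlab | ⟨u, v, hsel, hmove⟩)
      · exact fun hC => hlab hC.1
      · intro hC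
        have hC' : CharSat K Q (d+1) a b := by simp only [CharSat]; exact hC
        rcases hsel with heq | heq
        · obtain ⟨rfl, rfl⟩ := Prod.mk.injEq .. ▸ (Prod.ext_iff.1 heq)
          exact defender_core K Q d IH hC' hmove
        · obtain ⟨rfl, rfl⟩ := Prod.mk.injEq .. ▸ (Prod.ext_iff.1 heq)
          exact defender_core K Q d IH (charSat_symm K Q hC') hmove
    · intro hnC
      by_cases hlab : ∀ p, K.label a p ↔ K.label b p
      · right
        have hQ : ∃ (i : ι) (S : Set V),
            ¬ (Q i (K.succ a).card {z | z ∈ K.succ a ∧ ∃ x ∈ S, CharSat K Q d x z}.ncard ↔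
               Q i (K.succ b).card {z | z ∈ K.succ b ∧ ∃ x ∈ S, CharSat K Q d x z}.ncard) := by
          by_contra hc
          push_neg at hc
          exact hnC ⟨hlab, hc⟩
        rcases hQ with ⟨i, S, hiS⟩
        by_cases ha : Q i (K.succ a).card {z | z ∈ K.succ a ∧ ∃ x ∈ S, CharSat K Q d x z}.ncard
        · have hb : ¬ Q i (K.succ b).card
              {z | z ∈ K.succ b ∧ ∃ x ∈ S, CharSat K Q d x z}.ncard :=
            fun hb => hiS ⟨fun _ => hb, fun _ => ha⟩
          exact ⟨a, b, Or.inl rfl, attacker_core K Q d IH ha hb⟩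
        · have hb : Q i (K.succ b).card
              {z | z ∈ K.succ b ∧ ∃ x ∈ S, CharSat K Q d x z}.ncard := by
            by_contra hb
            exact hiS ⟨fun h => absurd h ha, fun h => absurd h hb⟩
          exact ⟨b, a, Or.inr rfl, attacker_core K Q d IH hb ha⟩
      · exact Or.inl hlab

end Aux

/-- if `N,v` satisfies the canonical `𝒬`-characteristic depth-`d` formula
`φ^{𝒬,d}_{M⊔N,w}` of `w` computed in the disjoint union `M ⊔ N`, then Player 2 (the
defender) has a winning strategy in the `d`-round `𝒬`-bisimulation game on `(M,w)` and
`(N,v)`. -/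
theorem charSat_implies_defender_win
    {P V W ι : Type} [Fintype V] [Fintype W] [DecidableEq V] [DecidableEq W]
    (M : Kripke P V) (N : Kripke P W) (Q : ι → ℕ → ℕ → Prop) (w : V) (v : W) (d : ℕ)
    (h : CharSat (M.sum N) Q d (Sum.inl w) (Sum.inr v)) :
    DefWin (M.sum N) Q d (Sum.inl w) (Sum.inr v) := by
  exact fun hA => (attWin_iff_not_charSat (M.sum N) Q d _ _).1 hA h
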